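/- (Main theorem, three-point case) Let a, b, c, a', b', c' ∈ ℝ² and suppose {(a,a'),(b,b'),(c,c')} is a max-sum matching of {a,b,c} with {a',b',c'} for the squared Euclidean distance, i.e., for every permutation σ of (a',b',c'), ‖a-σ₁‖² + ‖b-σ₂‖² + ‖c-σ₃‖² ≤ ‖a-a'‖² + ‖b-b'‖² + ‖c-c'‖². Then the three disks B(aa'), B(bb'), B(cc') (each having the corresponding matched segment as diameter) have a common point. -/

import Mathlib

open scoped InnerProductSpace

section Aux

variable {E : Type*} [NormedAddCommGroup E] [InnerProductSpace ℝ E]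

private lemma quad_aux (A C : ℝ) (h : ∀ t : ℝ, 0 ≤ t → t ≤ 1 → 0 ≤ 2*t*A + t^2*C) :
    0 ≤ A := by
  by_contra hA
  push_neg at hA
  rcases le_or_gt C 0 with hC | hC
  · nlinarith [h 1 zero_le_one le_rfl]
  · have h1 : (0:ℝ) < -A/C := div_pos (by linarith) hC
    have ht0 : (0:ℝ) < min 1 (-A/C) := lt_min one_pos h1
    have h3 := h _ ht0.le (min_le_left _ _)
    have h4 : min 1 (-A/C) * C ≤ -A := by
      have := mul_le_mul_of_nonneg_right (min_le_right 1 (-A/C)) hC.le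
      rwa [div_mul_cancel₀ (-A) (ne_of_gt hC)] at this
    nlinarith

private lemma expand_midpoint_sq (o x y : E) :
    ‖o - midpoint ℝ x y‖^2 = ⟪o - x, o - y⟫_ℝ + (‖x - y‖/2)^2 := by
  have e : ∀ v : E, ‖v‖^2 = ⟪v,v⟫_ℝ := fun v => (real_inner_self_eq_norm_sq v).symm
  simp only [div_pow, e, midpoint_eq_smul_add, invOf_eq_inv]
  simp only [inner_sub_left, inner_sub_right, inner_add_left, inner_add_right,
    real_inner_smul_left, real_inner_smul_right]
  rw [real_inner_comm x o, real_inner_comm y o, real_inner_comm y x]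
  ring

private lemma Mident (x y z t : E) :
    ⟪midpoint ℝ x y, midpoint ℝ z t⟫_ℝ
      - ((‖midpoint ℝ x y‖^2 - (‖x-y‖/2)^2) + (‖midpoint ℝ z t‖^2 - (‖z-t‖/2)^2))/2
    = ⟪x - y, z - t⟫_ℝ/4 - ⟪x - z, y - t⟫_ℝ/2 := by
  have e : ∀ v : E, ‖v‖^2 = ⟪v,v⟫_ℝ := fun v => (real_inner_self_eq_norm_sq v).symm
  simp only [div_pow, e, midpoint_eq_smul_add, invOf_eq_inv]
  simp only [inner_sub_left, inner_sub_right, inner_add_left, inner_add_right,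
    real_inner_smul_left, real_inner_smul_right]
  rw [real_inner_comm y x, real_inner_comm z x, real_inner_comm t x,
    real_inner_comm z y, real_inner_comm t y, real_inner_comm t z]
  ring

private lemma mem_ball_of_inner {o x y : E} (h : ⟪o - x, o - y⟫_ℝ ≤ 0) :
    o ∈ Metric.closedBall (midpoint ℝ x y) (dist x y / 2) := by
  rw [Metric.mem_closedBall, dist_eq_norm, dist_eq_norm]
  have h2 := expand_midpoint_sq o x y
  nlinarith [norm_nonneg (x - y), norm_nonneg (o - midpoint ℝ x y)]

private lemma three_balls (p q : Fin 3 → E)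
    (hpq : ∀ i j, ⟪p i - p j, q i - q j⟫_ℝ ≤ 0) :
    ∃ o : E, ∀ i, ⟪o - p i, o - q i⟫_ℝ ≤ 0 := by
  obtain ⟨m, hm⟩ : ∃ m : Fin 3 → E, m = fun i => midpoint ℝ (p i) (q i) := ⟨_, rfl⟩
  obtain ⟨s, hs⟩ : ∃ s : Fin 3 → ℝ, s = fun i => ‖m i‖^2 - (‖p i - q i‖/2)^2 := ⟨_, rfl⟩
  obtain ⟨M, hMdef⟩ : ∃ M : Fin 3 → Fin 3 → ℝ,
      M = fun i j => ⟪m i, m j⟫_ℝ - (s i + s j)/2 := ⟨_, rfl⟩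
  have hMeq : ∀ i j, M i j = ⟪p i - q i, p j - q j⟫_ℝ/4 - ⟪p i - p j, q i - q j⟫_ℝ/2 := by
    intro i j
    simp only [hMdef, hs, hm]
    exact Mident (p i) (q i) (p j) (q j)
  have hMsymm : ∀ i j, M j i = M i j := by
    intro i j
    simp only [hMdef]
    rw [real_inner_comm (m i) (m j)]
    ring
  have hMinner : ∀ a b, ⟪m a, m b⟫_ℝ = M a b + (s a + s b)/2 := by
    intro a b
    simp only [hMdef]
    ring
  obtain ⟨Φ, hΦ⟩ : ∃ Φ : (Fin 3 → ℝ) → ℝ,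
      Φ = fun l => ∑ i, ∑ j, l i * l j * M i j := ⟨_, rfl⟩
  -- copositivity
  have hcop : ∀ l : Fin 3 → ℝ, (∀ i, 0 ≤ l i) → 0 ≤ Φ l := by
    intro l hl
    have hv : (0:ℝ) ≤ ⟪l 0 • (p 0 - q 0) + l 1 • (p 1 - q 1) + l 2 • (p 2 - q 2),
        l 0 • (p 0 - q 0) + l 1 • (p 1 - q 1) + l 2 • (p 2 - q 2)⟫_ℝ :=
      real_inner_self_nonneg
    simp only [inner_add_left, inner_add_right, real_inner_smul_left,
      real_inner_smul_right] at hv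
    rw [real_inner_comm (p 0 - q 0) (p 1 - q 1), real_inner_comm (p 0 - q 0) (p 2 - q 2),
      real_inner_comm (p 1 - q 1) (p 2 - q 2)] at hv
    have t01 : l 0 * l 1 * ⟪p 0 - p 1, q 0 - q 1⟫_ℝ ≤ 0 :=
      mul_nonpos_of_nonneg_of_nonpos (mul_nonneg (hl 0) (hl 1)) (hpq 0 1)
    have t02 : l 0 * l 2 * ⟪p 0 - p 2, q 0 - q 2⟫_ℝ ≤ 0 :=
      mul_nonpos_of_nonneg_of_nonpos (mul_nonneg (hl 0) (hl 2)) (hpq 0 2)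
    have t12 : l 1 * l 2 * ⟪p 1 - p 2, q 1 - q 2⟫_ℝ ≤ 0 :=
      mul_nonpos_of_nonneg_of_nonpos (mul_nonneg (hl 1) (hl 2)) (hpq 1 2)
    have t10 : l 1 * l 0 * ⟪p 1 - p 0, q 1 - q 0⟫_ℝ ≤ 0 :=
      mul_nonpos_of_nonneg_of_nonpos (mul_nonneg (hl 1) (hl 0)) (hpq 1 0)
    have t20 : l 2 * l 0 * ⟪p 2 - p 0, q 2 - q 0⟫_ℝ ≤ 0 :=
      mul_nonpos_of_nonneg_of_nonpos (mul_nonneg (hl 2) (hl 0)) (hpq 2 0)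
    have t21 : l 2 * l 1 * ⟪p 2 - p 1, q 2 - q 1⟫_ℝ ≤ 0 :=
      mul_nonpos_of_nonneg_of_nonpos (mul_nonneg (hl 2) (hl 1)) (hpq 2 1)
    simp only [hΦ, Fin.sum_univ_three, hMeq, sub_self, inner_zero_left, inner_zero_right]
    rw [real_inner_comm (p 0 - q 0) (p 1 - q 1), real_inner_comm (p 0 - q 0) (p 2 - q 2),
      real_inner_comm (p 1 - q 1) (p 2 - q 2)]
    ring_nf
    ring_nf at hv t01 t02 t12 t10 t20 t21
    linarith
  -- minimizer on the simplex
  have hcont : Continuous Φ := by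
    simp only [hΦ]
    fun_prop
  obtain ⟨l, hlmem, hlmin⟩ := (isCompact_stdSimplex ℝ (Fin 3)).exists_isMinOn
    ⟨fun _ => 1/3, fun i => by norm_num, by norm_num [Fin.sum_univ_three]⟩
    hcont.continuousOn
  have hl0 : ∀ i, 0 ≤ l i := hlmem.1
  have hl1 : l 0 + l 1 + l 2 = 1 := by
    have h2 := hlmem.2
    rwa [Fin.sum_univ_three] at h2
  -- first-order conditions at the minimizer, giving Φ l ≤ (M l)_i for each row i
  have hfoc0 : Φ l ≤ l 0 * M 0 0 + l 1 * M 0 1 + l 2 * M 0 2 := by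
    have key := quad_aux (l 0 * M 0 0 + l 1 * M 0 1 + l 2 * M 0 2 - Φ l)
      (Φ l - 2*(l 0 * M 0 0 + l 1 * M 0 1 + l 2 * M 0 2) + M 0 0) ?_
    · linarith
    intro t ht0 ht1
    have hmem : (![(1-t)*l 0 + t, (1-t)*l 1, (1-t)*l 2]) ∈ stdSimplex ℝ (Fin 3) := by
      refine ⟨fun j => ?_, ?_⟩
      · fin_cases j <;> simp <;> nlinarith [hl0 0, hl0 1, hl0 2]
      · rw [Fin.sum_univ_three]
        simp only [Matrix.cons_val_zero, Matrix.cons_val_one, Matrix.head_cons,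
          Matrix.cons_val_two, Matrix.tail_cons]
        linear_combination (1-t)*hl1
    have hle : Φ l ≤ Φ ![(1-t)*l 0 + t, (1-t)*l 1, (1-t)*l 2] := hlmin hmem
    have hexp : Φ ![(1-t)*l 0 + t, (1-t)*l 1, (1-t)*l 2]
        = Φ l + 2*t*(l 0 * M 0 0 + l 1 * M 0 1 + l 2 * M 0 2 - Φ l)
          + t^2*(Φ l - 2*(l 0 * M 0 0 + l 1 * M 0 1 + l 2 * M 0 2) + M 0 0) := by
      simp only [hΦ, Fin.sum_univ_three, Matrix.cons_val_zero, Matrix.cons_val_one,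
        Matrix.head_cons, Matrix.cons_val_two, Matrix.tail_cons]
      rw [hMsymm 0 1, hMsymm 0 2, hMsymm 1 2]
      ring
    linarith
  have hfoc1 : Φ l ≤ l 0 * M 1 0 + l 1 * M 1 1 + l 2 * M 1 2 := by
    have key := quad_aux (l 0 * M 1 0 + l 1 * M 1 1 + l 2 * M 1 2 - Φ l)
      (Φ l - 2*(l 0 * M 1 0 + l 1 * M 1 1 + l 2 * M 1 2) + M 1 1) ?_
    · linarith
    intro t ht0 ht1
    have hmem : (![(1-t)*l 0, (1-t)*l 1 + t, (1-t)*l 2]) ∈ stdSimplex ℝ (Fin 3) := by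
      refine ⟨fun j => ?_, ?_⟩
      · fin_cases j <;> simp <;> nlinarith [hl0 0, hl0 1, hl0 2]
      · rw [Fin.sum_univ_three]
        simp only [Matrix.cons_val_zero, Matrix.cons_val_one, Matrix.head_cons,
          Matrix.cons_val_two, Matrix.tail_cons]
        linear_combination (1-t)*hl1
    have hle : Φ l ≤ Φ ![(1-t)*l 0, (1-t)*l 1 + t, (1-t)*l 2] := hlmin hmem
    have hexp : Φ ![(1-t)*l 0, (1-t)*l 1 + t, (1-t)*l 2]
        = Φ l + 2*t*(l 0 * M 1 0 + l 1 * M 1 1 + l 2 * M 1 2 - Φ l)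
          + t^2*(Φ l - 2*(l 0 * M 1 0 + l 1 * M 1 1 + l 2 * M 1 2) + M 1 1) := by
      simp only [hΦ, Fin.sum_univ_three, Matrix.cons_val_zero, Matrix.cons_val_one,
        Matrix.head_cons, Matrix.cons_val_two, Matrix.tail_cons]
      rw [hMsymm 0 1, hMsymm 0 2, hMsymm 1 2]
      ring
    linarith
  have hfoc2 : Φ l ≤ l 0 * M 2 0 + l 1 * M 2 1 + l 2 * M 2 2 := by
    have key := quad_aux (l 0 * M 2 0 + l 1 * M 2 1 + l 2 * M 2 2 - Φ l)
      (Φ l - 2*(l 0 * M 2 0 + l 1 * M 2 1 + l 2 * M 2 2) + M 2 2) ?_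
    · linarith
    intro t ht0 ht1
    have hmem : (![(1-t)*l 0, (1-t)*l 1, (1-t)*l 2 + t]) ∈ stdSimplex ℝ (Fin 3) := by
      refine ⟨fun j => ?_, ?_⟩
      · fin_cases j <;> simp <;> nlinarith [hl0 0, hl0 1, hl0 2]
      · rw [Fin.sum_univ_three]
        simp only [Matrix.cons_val_zero, Matrix.cons_val_one, Matrix.head_cons,
          Matrix.cons_val_two, Matrix.tail_cons]
        linear_combination (1-t)*hl1
    have hle : Φ l ≤ Φ ![(1-t)*l 0, (1-t)*l 1, (1-t)*l 2 + t] := hlmin hmem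
    have hexp : Φ ![(1-t)*l 0, (1-t)*l 1, (1-t)*l 2 + t]
        = Φ l + 2*t*(l 0 * M 2 0 + l 1 * M 2 1 + l 2 * M 2 2 - Φ l)
          + t^2*(Φ l - 2*(l 0 * M 2 0 + l 1 * M 2 1 + l 2 * M 2 2) + M 2 2) := by
      simp only [hΦ, Fin.sum_univ_three, Matrix.cons_val_zero, Matrix.cons_val_one,
        Matrix.head_cons, Matrix.cons_val_two, Matrix.tail_cons]
      rw [hMsymm 0 1, hMsymm 0 2, hMsymm 1 2]
      ring
    linarith
  have hfoc : ∀ i, Φ l ≤ l 0 * M i 0 + l 1 * M i 1 + l 2 * M i 2 := by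
    intro i
    fin_cases i
    · exact hfoc0
    · exact hfoc1
    · exact hfoc2
  -- the common point
  refine ⟨l 0 • m 0 + l 1 • m 1 + l 2 • m 2, ?_⟩
  intro i
  obtain ⟨o, ho⟩ : ∃ o : E, o = l 0 • m 0 + l 1 • m 1 + l 2 • m 2 := ⟨_, rfl⟩
  rw [← ho]
  have hB : ⟪o - p i, o - q i⟫_ℝ = Φ l - 2 * (l 0 * M i 0 + l 1 * M i 1 + l 2 * M i 2) := by
    have e1 : ⟪o - p i, o - q i⟫_ℝ = ‖o - m i‖^2 - (‖p i - q i‖/2)^2 := by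
      have := expand_midpoint_sq o (p i) (q i)
      simp only [hm]
      linarith [this]
    have e2 : ‖o - m i‖^2 = ⟪o - m i, o - m i⟫_ℝ := (real_inner_self_eq_norm_sq _).symm
    have e3 : (‖p i - q i‖/2)^2 = ‖m i‖^2 - s i := by simp only [hs]; ring
    have e4 : ‖m i‖^2 = ⟪m i, m i⟫_ℝ := (real_inner_self_eq_norm_sq _).symm
    rw [e1, e2, e3, e4]
    simp only [hΦ, Fin.sum_univ_three, ho]
    simp only [inner_add_left, inner_add_right, inner_sub_left, inner_sub_right,
      real_inner_smul_left, real_inner_smul_right]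
    simp only [hMinner]
    simp only [hMsymm i 0, hMsymm i 1, hMsymm i 2, hMsymm 0 1, hMsymm 0 2, hMsymm 1 2]
    linear_combination ((l 0 * s 0 + l 1 * s 1 + l 2 * s 2) - s i) * hl1
  rw [hB]
  have h1 := hfoc i
  have h2 := hcop l hl0
  linarith

end Aux

theorem maxsum_three_disks_common_point
    (a b c a' b' c' : EuclideanSpace ℝ (Fin 2))
    (hmax : ∀ σ : Equiv.Perm (Fin 3),
      ∑ i, ‖![a, b, c] i - ![a', b', c'] (σ i)‖ ^ 2 ≤
        ‖a - a'‖ ^ 2 + ‖b - b'‖ ^ 2 + ‖c - c'‖ ^ 2) :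
    ∃ o : EuclideanSpace ℝ (Fin 2),
      o ∈ Metric.closedBall (midpoint ℝ a a') (dist a a' / 2) ∧
      o ∈ Metric.closedBall (midpoint ℝ b b') (dist b b' / 2) ∧
      o ∈ Metric.closedBall (midpoint ℝ c c') (dist c c' / 2) := by
  have h01 := hmax (Equiv.swap 0 1)
  simp [Fin.sum_univ_three, Equiv.swap_apply_def] at h01
  have h02 := hmax (Equiv.swap 0 2)
  simp [Fin.sum_univ_three, Equiv.swap_apply_def] at h02
  have h12 := hmax (Equiv.swap 1 2)
  simp [Fin.sum_univ_three, Equiv.swap_apply_def] at h12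
  have hab : ⟪a - b, a' - b'⟫_ℝ ≤ 0 := by
    have key : ‖a - a'‖^2 + ‖b - b'‖^2 - ‖a - b'‖^2 - ‖b - a'‖^2 = -2*⟪a-b, a'-b'⟫_ℝ := by
      simp only [norm_sub_sq_real, inner_sub_left, inner_sub_right]
      ring
    linarith
  have hac : ⟪a - c, a' - c'⟫_ℝ ≤ 0 := by
    have key : ‖a - a'‖^2 + ‖c - c'‖^2 - ‖a - c'‖^2 - ‖c - a'‖^2 = -2*⟪a-c, a'-c'⟫_ℝ := by
      simp only [norm_sub_sq_real, inner_sub_left, inner_sub_right]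
      ring
    linarith
  have hbc : ⟪b - c, b' - c'⟫_ℝ ≤ 0 := by
    have key : ‖b - b'‖^2 + ‖c - c'‖^2 - ‖b - c'‖^2 - ‖c - b'‖^2 = -2*⟪b-c, b'-c'⟫_ℝ := by
      simp only [norm_sub_sq_real, inner_sub_left, inner_sub_right]
      ring
    linarith
  have flip : ∀ x y z w : EuclideanSpace ℝ (Fin 2),
      ⟪x - y, z - w⟫_ℝ = ⟪y - x, w - z⟫_ℝ := by
    intro x y z w
    rw [← neg_sub y x, ← neg_sub w z, inner_neg_neg]
  have hpq : ∀ i j, ⟪![a, b, c] i - ![a, b, c] j, ![a', b', c'] i - ![a', b', c'] j⟫_ℝ ≤ 0 := by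
    intro i j
    fin_cases i <;> fin_cases j <;>
      · simp only [Matrix.cons_val_zero, Matrix.cons_val_one, Matrix.head_cons,
          Matrix.cons_val_two, Matrix.tail_cons, sub_self, inner_zero_left, le_refl]
        first
        | exact hab
        | exact hac
        | exact hbc
        | (rw [flip]; first | exact hab | exact hac | exact hbc)
        | skip
  obtain ⟨o, hO⟩ := three_balls ![a, b, c] ![a', b', c'] hpq
  refine ⟨o, ?_, ?_, ?_⟩
  · have := hO 0
    simp only [Matrix.cons_val_zero] at this
    exact mem_ball_of_inner this
  · have := hO 1
    simp only [Matrix.cons_val_one, Matrix.head_cons] at this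
    exact mem_ball_of_inner this
  · have := hO 2
    simp only [Matrix.cons_val_two, Matrix.tail_cons, Matrix.head_cons] at this
    exact mem_ball_of_inner this
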